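/- In the one-hidden-layer ReLU ANN setting with constant target α, the generalized gradient vanishes at a parameter vector φ if and only if the risk vanishes: ‖G(φ)‖ = 0 ⟺ L_∞(φ) = 0. -/

import Mathlib

open MeasureTheory

noncomputable section

/-- weight parameters -/
def wp (H : ℕ) (φ : EuclideanSpace ℝ (Fin (3*H+1))) (j : Fin H) : ℝ := φ ⟨j.1, by omega⟩
/-- bias parameters -/
def bp (H : ℕ) (φ : EuclideanSpace ℝ (Fin (3*H+1))) (j : Fin H) : ℝ := φ ⟨H + j.1, by omega⟩
/-- outer weight parameters -/
def vp (H : ℕ) (φ : EuclideanSpace ℝ (Fin (3*H+1))) (j : Fin H) : ℝ := φ ⟨2*H + j.1, by omega⟩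
/-- output bias -/
def cp (H : ℕ) (φ : EuclideanSpace ℝ (Fin (3*H+1))) : ℝ := φ ⟨3*H, by omega⟩

/-- realization of the one-hidden-layer ReLU network -/
def realization (H : ℕ) (φ : EuclideanSpace ℝ (Fin (3*H+1))) (x : ℝ) : ℝ :=
  cp H φ + ∑ j : Fin H, vp H φ j * max (wp H φ j * x + bp H φ j) 0

/-- risk with constant target α -/
def risk (H : ℕ) (α : ℝ) (φ : EuclideanSpace ℝ (Fin (3*H+1))) : ℝ :=
  ∫ y in (0:ℝ)..1, (realization H φ y - α)^2

/-- activity interval I_j^φ -/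
def actSet (H : ℕ) (φ : EuclideanSpace ℝ (Fin (3*H+1))) (j : Fin H) : Set ℝ :=
  {x | x ∈ Set.Icc (0:ℝ) 1 ∧ 0 < wp H φ j * x + bp H φ j}

/-- generalized gradient G -/
def grad (H : ℕ) (α : ℝ) (φ : EuclideanSpace ℝ (Fin (3*H+1))) :
    EuclideanSpace ℝ (Fin (3*H+1)) := WithLp.toLp 2 fun (i : Fin (3*H+1)) =>
  if h : i.1 < H then
    2 * vp H φ ⟨i.1, h⟩ * ∫ x in actSet H φ ⟨i.1, h⟩, x * (realization H φ x - α)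
  else if h2 : i.1 < 2*H then
    2 * vp H φ ⟨i.1 - H, by omega⟩ * ∫ x in actSet H φ ⟨i.1 - H, by omega⟩, (realization H φ x - α)
  else if h3 : i.1 < 3*H then
    2 * ∫ x in (0:ℝ)..1,
      max (wp H φ ⟨i.1 - 2*H, by omega⟩ * x + bp H φ ⟨i.1 - 2*H, by omega⟩) 0 * (realization H φ x - α)
  else 2 * ∫ x in (0:ℝ)..1, (realization H φ x - α)

/-- Lyapunov function V -/
def lyap (H : ℕ) (α : ℝ) (φ : EuclideanSpace ℝ (Fin (3*H+1))) : ℝ :=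
  ‖φ‖^2 + (cp H φ - 2*α)^2


section aux

variable (H : ℕ) (α : ℝ) (φ : EuclideanSpace ℝ (Fin (3*H+1)))

lemma cont_realization : Continuous (realization H φ) := by
  unfold realization
  exact continuous_const.add (continuous_finset_sum _ fun j _ =>
    continuous_const.mul (((continuous_const.mul continuous_id').add continuous_const).max
      continuous_const))

lemma measurableSet_actSet (j : Fin H) : MeasurableSet (actSet H φ j) := by
  have h : actSet H φ j = Set.Icc 0 1 ∩ {x | 0 < wp H φ j * x + bp H φ j} := rfl
  rw [h]
  exact measurableSet_Icc.inter
    ((isOpen_lt continuous_const ((continuous_const.mul continuous_id').add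
      continuous_const)).measurableSet)

lemma actSet_subset (j : Fin H) : actSet H φ j ⊆ Set.Icc (0:ℝ) 1 := fun _ hx => hx.1

/-- key decomposition of the interval integral of `max(wx+b,0) * g` -/
lemma interval_max_eq (j : Fin H) (g : ℝ → ℝ) (hg : Continuous g) :
    (∫ x in (0:ℝ)..1, max (wp H φ j * x + bp H φ j) 0 * g x)
      = wp H φ j * (∫ x in actSet H φ j, x * g x)
        + bp H φ j * (∫ x in actSet H φ j, g x) := by
  have hs : MeasurableSet {x : ℝ | 0 < wp H φ j * x + bp H φ j} :=
    (isOpen_lt continuous_const ((continuous_const.mul continuous_id').add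
      continuous_const)).measurableSet
  have heq : ∀ x : ℝ, max (wp H φ j * x + bp H φ j) 0 * g x
      = Set.indicator {x : ℝ | 0 < wp H φ j * x + bp H φ j}
          (fun x => (wp H φ j * x + bp H φ j) * g x) x := by
    intro x
    by_cases h : 0 < wp H φ j * x + bp H φ j
    · simp only [Set.indicator_apply, Set.mem_setOf_eq, if_pos h, max_eq_left h.le]
    · simp only [Set.indicator_apply, Set.mem_setOf_eq, if_neg h,
        max_eq_right (not_lt.mp h), zero_mul]
  rw [intervalIntegral.integral_of_le zero_le_one,
    Measure.restrict_congr_set Ioc_ae_eq_Icc]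
  simp_rw [heq]
  rw [setIntegral_indicator hs]
  have hact : Set.Icc (0:ℝ) 1 ∩ {x : ℝ | 0 < wp H φ j * x + bp H φ j} = actSet H φ j := rfl
  rw [hact]
  have h1 : IntegrableOn (fun x : ℝ => wp H φ j * (x * g x)) (actSet H φ j) volume :=
    ((continuous_const.mul (continuous_id'.mul hg)).integrableOn_Icc).mono_set
      (actSet_subset H φ j)
  have h2 : IntegrableOn (fun x : ℝ => bp H φ j * g x) (actSet H φ j) volume :=
    ((continuous_const.mul hg).integrableOn_Icc).mono_set (actSet_subset H φ j)
  have hexp : ∀ x : ℝ, (wp H φ j * x + bp H φ j) * g x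
      = wp H φ j * (x * g x) + bp H φ j * g x := fun x => by ring
  simp_rw [hexp]
  rw [integral_add h1 h2, integral_const_mul, integral_const_mul]

end aux

theorem grad_eq_zero_iff_risk_eq_zero (H : ℕ) (hH : 0 < H) (α : ℝ)
    (φ : EuclideanSpace ℝ (Fin (3*H+1))) :
    ‖grad H α φ‖ = 0 ↔ risk H α φ = 0 := by
  have hf : Continuous (fun x => realization H φ x - α) :=
    (cont_realization H φ).sub continuous_const
  constructor
  · intro hG
    have hG0 : grad H α φ = 0 := norm_eq_zero.mp hG
    have hcomp : ∀ i, grad H α φ i = 0 := fun i => by rw [hG0]; rfl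
    -- extract vanishing of components
    have hw : ∀ j : Fin H,
        vp H φ j * ∫ x in actSet H φ j, x * (realization H φ x - α) = 0 := by
      intro j
      have h := hcomp ⟨j.1, by omega⟩
      simp only [grad, PiLp.toLp_apply, dif_pos j.2, Fin.eta] at h
      rw [mul_assoc] at h
      rcases mul_eq_zero.mp h with h' | h'
      · norm_num at h'
      · exact h'
    have hb : ∀ j : Fin H,
        vp H φ j * ∫ x in actSet H φ j, (realization H φ x - α) = 0 := by
      intro j
      have h := hcomp ⟨H + j.1, by omega⟩
      have hj1 : ¬ (H + j.1 < H) := by omega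
      have hj2 : H + j.1 < 2*H := by omega
      simp only [grad, PiLp.toLp_apply, dif_neg hj1, dif_pos hj2] at h
      have hjj : (⟨H + j.1 - H, by omega⟩ : Fin H) = j := by
        ext; simp
      rw [hjj, mul_assoc] at h
      rcases mul_eq_zero.mp h with h' | h'
      · norm_num at h'
      · exact h'
    have hc : (∫ x in (0:ℝ)..1, (realization H φ x - α)) = 0 := by
      have h := hcomp ⟨3*H, by omega⟩
      have hj1 : ¬ (3*H < H) := by omega
      have hj2 : ¬ (3*H < 2*H) := by omega
      have hj3 : ¬ (3*H < 3*H) := by omega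
      simp only [grad, PiLp.toLp_apply, dif_neg hj1, dif_neg hj2, dif_neg hj3] at h
      rcases mul_eq_zero.mp h with h' | h'
      · norm_num at h'
      · exact h'
    -- expand the risk
    have expand : ∀ x : ℝ, (realization H φ x - α)^2 =
        (cp H φ - α) * (realization H φ x - α)
        + ∑ j : Fin H, vp H φ j *
            (max (wp H φ j * x + bp H φ j) 0 * (realization H φ x - α)) := by
      intro x
      simp_rw [← mul_assoc]
      rw [← Finset.sum_mul]
      unfold realization
      ring
    rw [risk]
    calc (∫ x in (0:ℝ)..1, (realization H φ x - α)^2)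
        = ∫ x in (0:ℝ)..1, ((cp H φ - α) * (realization H φ x - α)
            + ∑ j : Fin H, vp H φ j *
              (max (wp H φ j * x + bp H φ j) 0 * (realization H φ x - α))) := by
          simp_rw [expand]
      _ = (cp H φ - α) * (∫ x in (0:ℝ)..1, (realization H φ x - α))
            + ∑ j : Fin H, vp H φ j * ∫ x in (0:ℝ)..1,
              (max (wp H φ j * x + bp H φ j) 0 * (realization H φ x - α)) := by
          rw [intervalIntegral.integral_add]
          · rw [intervalIntegral.integral_const_mul,
              intervalIntegral.integral_finset_sum]
            · simp_rw [intervalIntegral.integral_const_mul]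
            · intro j _
              exact (continuous_const.mul ((((continuous_const.mul
                continuous_id').add continuous_const).max continuous_const).mul
                  hf)).intervalIntegrable 0 1
          · exact (continuous_const.mul hf).intervalIntegrable 0 1
          · exact (continuous_finset_sum _ fun j _ => continuous_const.mul
              ((((continuous_const.mul continuous_id').add
                continuous_const).max continuous_const).mul hf)).intervalIntegrable 0 1
      _ = 0 := by
          rw [hc, mul_zero, zero_add]
          apply Finset.sum_eq_zero
          intro j _
          rw [interval_max_eq H φ j _ hf]
          have : vp H φ j * (wp H φ j * (∫ x in actSet H φ j,
              x * (realization H φ x - α)) + bp H φ j * (∫ x in actSet H φ j,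
                (realization H φ x - α)))
            = wp H φ j * (vp H φ j * ∫ x in actSet H φ j,
                x * (realization H φ x - α))
              + bp H φ j * (vp H φ j * ∫ x in actSet H φ j,
                (realization H φ x - α)) := by ring
          rw [this, hw j, hb j, mul_zero, mul_zero, add_zero]
  · intro hR
    -- risk zero gives a.e. vanishing of the error on [0,1]
    have hIoc : ∀ᵐ x ∂(volume.restrict (Set.Ioc (0:ℝ) 1)),
        realization H φ x - α = 0 := by
      rw [risk, intervalIntegral.integral_of_le zero_le_one] at hR
      have hint : IntegrableOn (fun x => (realization H φ x - α)^2)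
          (Set.Ioc (0:ℝ) 1) volume :=
        ((hf.pow 2).integrableOn_Icc).mono_set Set.Ioc_subset_Icc_self
      have h0 := (integral_eq_zero_iff_of_nonneg
        (fun x => sq_nonneg _) hint).mp hR
      filter_upwards [h0] with x hx
      exact pow_eq_zero_iff (two_ne_zero) |>.mp hx
    have hIcc : ∀ᵐ x ∂(volume.restrict (Set.Icc (0:ℝ) 1)),
        realization H φ x - α = 0 := by
      rwa [Measure.restrict_congr_set Ioc_ae_eq_Icc] at hIoc
    have hsetA : ∀ j : Fin H,
        (∫ x in actSet H φ j, x * (realization H φ x - α)) = 0 := by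
      intro j
      apply integral_eq_zero_of_ae
      filter_upwards [ae_restrict_of_ae_restrict_of_subset (actSet_subset H φ j) hIcc]
        with x hx
      simp [hx]
    have hsetB : ∀ j : Fin H,
        (∫ x in actSet H φ j, (realization H φ x - α)) = 0 := by
      intro j
      apply integral_eq_zero_of_ae
      filter_upwards [ae_restrict_of_ae_restrict_of_subset (actSet_subset H φ j) hIcc]
        with x hx
      simp [hx]
    have hint1 : ∀ g : ℝ → ℝ,
        (∫ x in (0:ℝ)..1, g x * (realization H φ x - α)) = 0 := by
      intro g
      rw [intervalIntegral.integral_of_le zero_le_one]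
      apply integral_eq_zero_of_ae
      filter_upwards [hIoc] with x hx
      simp [hx]
    have hlast : (∫ x in (0:ℝ)..1, (realization H φ x - α)) = 0 := by
      rw [intervalIntegral.integral_of_le zero_le_one]
      exact integral_eq_zero_of_ae hIoc
    have hzero : grad H α φ = 0 := by
      ext i
      show grad H α φ i = 0
      simp only [grad, PiLp.toLp_apply]
      split_ifs with h1 h2 h3
      · rw [hsetA, mul_zero]
      · rw [hsetB, mul_zero]
      · rw [hint1, mul_zero]
      · rw [hlast, mul_zero]
    rw [hzero, norm_zero]
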